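/- Let γ : [0,1] → R^n be absolutely continuous, F : R^n → R^m locally Lipschitz and directionally differentiable everywhere with F'(x,-u) = -F'(x,u) for all x,u. Then for a.e. t ∈ (0,1), the composition F∘γ is differentiable at t and d/dt (F∘γ)(t) = F'(γ(t), γ'(t)). -/

import Mathlib

open Filter Topology MeasureTheory

/-- A curve `γ : ℝ → E` is absolutely continuous on `[0,1]` iff it is the indefinite
integral of an integrable function (the standard characterization). -/
def AbsolutelyContinuousOn01 {E : Type*} [NormedAddCommGroup E] [NormedSpace ℝ E]
    (γ : ℝ → E) : Prop :=
  ∃ g : ℝ → E, IntegrableOn g (Set.Icc 0 1) ∧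
    ∀ t ∈ Set.Icc (0 : ℝ) 1, γ t = γ 0 + ∫ s in Set.Ioc 0 t, g s

section Aux

variable {G : Type*} [NormedAddCommGroup G] [NormedSpace ℝ G]
variable {H : Type*} [NormedAddCommGroup H] [NormedSpace ℝ H]

lemma my_map_neg_nhdsGT : Filter.map (fun r : ℝ => -r) (𝓝[>] (0:ℝ)) = 𝓝[<] (0:ℝ) := by
  have h := (Homeomorph.neg ℝ).isEmbedding.map_nhdsWithin_eq (Set.Ioi (0:ℝ)) 0
  simpa using h

lemma my_twoSided (F : G → H) (D' : G → G → H)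
    (hD' : ∀ x u, Tendsto (fun t : ℝ => t⁻¹ • (F (x + t • u) - F x)) (𝓝[>] 0) (𝓝 (D' x u)))
    (hodd : ∀ x u, D' x (-u) = -D' x u) (x v : G) :
    Tendsto (fun s : ℝ => s⁻¹ • (F (x + s • v) - F x)) (𝓝[≠] (0:ℝ)) (𝓝 (D' x v)) := by
  rw [← nhdsLT_sup_nhdsGT (0:ℝ), tendsto_sup]
  refine ⟨?_, hD' x v⟩
  rw [← my_map_neg_nhdsGT, tendsto_map'_iff]
  have h1 : Tendsto (fun t : ℝ => -(t⁻¹ • (F (x + t • (-v)) - F x))) (𝓝[>] (0:ℝ))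
      (𝓝 (D' x v)) := by
    have := (hD' x (-v)).neg
    rwa [hodd x v, neg_neg] at this
  refine h1.congr fun r => ?_
  show -(r⁻¹ • (F (x + r • (-v)) - F x)) = (-r)⁻¹ • (F (x + (-r) • v) - F x)
  simp [inv_neg, neg_smul, smul_neg]

lemma my_chain_at (F : G → H) (hF : LocallyLipschitz F) (D' : G → G → H)
    (hD' : ∀ x u, Tendsto (fun t : ℝ => t⁻¹ • (F (x + t • u) - F x)) (𝓝[>] 0) (𝓝 (D' x u)))
    (hodd : ∀ x u, D' x (-u) = -D' x u) (γ : ℝ → G) {t : ℝ} {v : G}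
    (hγ : HasDerivAt γ v t) : HasDerivAt (F ∘ γ) (D' (γ t) v) t := by
  set x := γ t with hx
  obtain ⟨K, s, hs, hK⟩ := hF x
  obtain ⟨ε, εpos, hball⟩ := Metric.mem_nhds_iff.1 hs
  rw [hasDerivAt_iff_tendsto_slope]
  have hsub : Tendsto (fun y : ℝ => y - t) (𝓝[≠] t) (𝓝[≠] (0:ℝ)) := by
    apply tendsto_nhdsWithin_of_tendsto_nhds_of_eventually_within
    · exact ((continuous_id.sub continuous_const).tendsto' t 0 (by simp)).mono_left
        nhdsWithin_le_nhds
    · filter_upwards [self_mem_nhdsWithin] with y hy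
      simpa [sub_eq_zero] using hy
  have hphi : Tendsto (fun y : ℝ => (y - t)⁻¹ • (F (x + (y - t) • v) - F x)) (𝓝[≠] t)
      (𝓝 (D' x v)) := (my_twoSided F D' hD' hodd x v).comp hsub
  have hψ : Tendsto (fun y => ‖y - t‖⁻¹ * ‖γ y - γ t - (y - t) • v‖) (𝓝 t) (𝓝 0) :=
    hasDerivAt_iff_tendsto.1 hγ
  have hev : ∀ᶠ y in 𝓝 t, γ y ∈ Metric.ball x ε ∧ x + (y - t) • v ∈ Metric.ball x ε := by
    have h1 : Tendsto γ (𝓝 t) (𝓝 x) := hγ.continuousAt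
    have h2 : Tendsto (fun y : ℝ => x + (y - t) • v) (𝓝 t) (𝓝 x) :=
      (continuous_const.add ((continuous_id.sub continuous_const).smul
        continuous_const)).tendsto' t x (by simp [hx])
    exact (h1.eventually (Metric.ball_mem_nhds x εpos)).and
      (h2.eventually (Metric.ball_mem_nhds x εpos))
  have herr : Tendsto
      (fun y => slope (F ∘ γ) t y - (y - t)⁻¹ • (F (x + (y - t) • v) - F x)) (𝓝[≠] t) (𝓝 0) := by
    apply squeeze_zero_norm' (a := fun y => (K : ℝ) * (‖y - t‖⁻¹ * ‖γ y - γ t - (y - t) • v‖))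
    · filter_upwards [hev.filter_mono nhdsWithin_le_nhds] with y hy
      have heq : slope (F ∘ γ) t y - (y - t)⁻¹ • (F (x + (y - t) • v) - F x)
          = (y - t)⁻¹ • (F (γ y) - F (x + (y - t) • v)) := by
        rw [slope_def_module, ← smul_sub]
        congr 1
        show F (γ y) - F (γ t) - (F (x + (y - t) • v) - F x) = _
        rw [← hx, sub_sub_sub_cancel_right]
      rw [heq, norm_smul]
      have hlip : ‖F (γ y) - F (x + (y - t) • v)‖ ≤ (K : ℝ) * ‖γ y - (x + (y - t) • v)‖ := by
        have := hK.dist_le_mul _ (hball hy.1) _ (hball hy.2)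
        simpa [dist_eq_norm] using this
      calc ‖(y - t)⁻¹‖ * ‖F (γ y) - F (x + (y - t) • v)‖
          ≤ ‖(y - t)⁻¹‖ * ((K : ℝ) * ‖γ y - (x + (y - t) • v)‖) := by
            exact mul_le_mul_of_nonneg_left hlip (norm_nonneg _)
        _ = (K : ℝ) * (‖y - t‖⁻¹ * ‖γ y - γ t - (y - t) • v‖) := by
            rw [norm_inv]
            have : γ y - (x + (y - t) • v) = γ y - γ t - (y - t) • v := by
              rw [← hx]; abel
            rw [this]; ring
    · have := hψ.const_mul (K : ℝ)
      simpa using this.mono_left nhdsWithin_le_nhds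
  have := herr.add hphi
  rw [zero_add] at this
  refine this.congr fun y => ?_
  simp
end Aux

section AC

variable {E : Type*} [NormedAddCommGroup E] [NormedSpace ℝ E] [CompleteSpace E]

lemma my_ae_hasDerivAt {γ : ℝ → E} {g : ℝ → E} (hg : IntegrableOn g (Set.Icc 0 1))
    (heq : ∀ t ∈ Set.Icc (0:ℝ) 1, γ t = γ 0 + ∫ s in Set.Ioc 0 t, g s) :
    ∀ᵐ t ∂(volume.restrict (Set.Ioo (0:ℝ) 1)), HasDerivAt γ (g t) t := by
  classical
  set g₀ : ℝ → E := (Set.Icc (0:ℝ) 1).indicator g with hg₀def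
  have hg₀i : Integrable g₀ := (integrable_indicator_iff measurableSet_Icc).2 hg
  have hloc : LocallyIntegrable g₀ volume := hg₀i.locallyIntegrable
  have hvit := VitaliFamily.ae_tendsto_average_norm_sub
      (IsUnifLocDoublingMeasure.vitaliFamily (volume : Measure ℝ) 1) hloc
  have hsub : ∀ a b : ℝ, 0 ≤ a → a ≤ b → b ≤ 1 → γ b - γ a = ∫ u in Set.Ioc a b, g u := by
    intro a b ha hab hb1
    rw [heq b ⟨ha.trans hab, hb1⟩, heq a ⟨ha, hab.trans hb1⟩]
    have hunion : Set.Ioc 0 b = Set.Ioc 0 a ∪ Set.Ioc a b := (Set.Ioc_union_Ioc_eq_Ioc ha hab).symm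
    have hint1 : IntegrableOn g (Set.Ioc 0 a) :=
      hg.mono_set (Set.Ioc_subset_Icc_self.trans (Set.Icc_subset_Icc le_rfl (hab.trans hb1)))
    have hint2 : IntegrableOn g (Set.Ioc a b) :=
      hg.mono_set (Set.Ioc_subset_Icc_self.trans (Set.Icc_subset_Icc ha hb1))
    rw [hunion, setIntegral_union (Set.Ioc_disjoint_Ioc_of_le le_rfl) measurableSet_Ioc hint1 hint2]
    abel
  filter_upwards [ae_restrict_of_ae hvit, ae_restrict_mem measurableSet_Ioo] with t ht htI
  have h0t : 0 < t := htI.1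
  have ht1 : t < 1 := htI.2
  have hg₀t : g₀ t = g t := Set.indicator_of_mem (Set.mem_Icc.mpr ⟨h0t.le, ht1.le⟩) g
  have hIb : ∀ a b : ℝ, 0 ≤ a → a ≤ b → b ≤ 1 →
      ‖γ b - γ a - (b - a) • g t‖ ≤ ∫ u in Set.Icc a b, ‖g₀ u - g₀ t‖ := by
    intro a b ha hab hb1
    rw [hsub a b ha hab hb1]
    have hint : IntegrableOn g (Set.Ioc a b) :=
      hg.mono_set (Set.Ioc_subset_Icc_self.trans (Set.Icc_subset_Icc ha hb1))
    have hconst : IntegrableOn (fun _ : ℝ => g t) (Set.Ioc a b) :=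
      integrableOn_const measure_Ioc_lt_top.ne
    have hconsteq : (b - a) • g t = ∫ _ in Set.Ioc a b, g t := by
      rw [setIntegral_const, Real.volume_real_Ioc_of_le hab]
    rw [hconsteq, ← integral_sub hint hconst]
    refine le_trans (norm_integral_le_integral_norm _) ?_
    rw [integral_Icc_eq_integral_Ioc]
    refine le_of_eq (setIntegral_congr_fun measurableSet_Ioc fun u hu => ?_)
    have hu01 : u ∈ Set.Icc (0:ℝ) 1 := ⟨(ha.trans_lt hu.1).le, hu.2.trans hb1⟩
    have ht01 : t ∈ Set.Icc (0:ℝ) 1 := ⟨h0t.le, ht1.le⟩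
    rw [hg₀def, Set.indicator_of_mem hu01, Set.indicator_of_mem ht01]
  have hR : Tendsto (fun y => ⨍ u in Set.Icc t y, ‖g₀ u - g₀ t‖) (𝓝[>] t) (𝓝 0) :=
    ht.comp (Real.tendsto_Icc_vitaliFamily_right t)
  have hL : Tendsto (fun y => ⨍ u in Set.Icc y t, ‖g₀ u - g₀ t‖) (𝓝[<] t) (𝓝 0) :=
    ht.comp (Real.tendsto_Icc_vitaliFamily_left t)
  rw [hasDerivAt_iff_tendsto_slope, ← nhdsLT_sup_nhdsGT t, tendsto_sup]
  constructor
  · -- left side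
    have h0 : Tendsto (fun y => slope γ t y - g t) (𝓝[<] t) (𝓝 0) := by
      apply squeeze_zero_norm'
        (a := fun y => ⨍ u in Set.Icc y t, ‖g₀ u - g₀ t‖) _ hL
      filter_upwards [Ico_mem_nhdsLT h0t] with y hy
      have hyt : y < t := hy.2
      have h0y : 0 ≤ y := hy.1
      have heq : slope γ t y - g t = (y - t)⁻¹ • (γ y - γ t - (y - t) • g t) := by
        have h : (y - t) ≠ 0 := sub_ne_zero.2 hyt.ne
        conv_rhs => rw [smul_sub, smul_smul, inv_mul_cancel₀ h, one_smul]
        rw [slope_def_module]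
      rw [heq, norm_smul, norm_inv, Real.norm_eq_abs, abs_of_neg (by linarith), neg_sub]
      have hnorm : ‖γ y - γ t - (y - t) • g t‖ = ‖γ t - γ y - (t - y) • g t‖ := by
        rw [show (y - t) • g t = -((t - y) • g t) by rw [← neg_smul, neg_sub], ← norm_neg]
        congr 1
        abel
      rw [hnorm]
      have hle := hIb y t h0y hyt.le ht1.le
      have havg : ⨍ u in Set.Icc y t, ‖g₀ u - g₀ t‖
          = (t - y)⁻¹ * ∫ u in Set.Icc y t, ‖g₀ u - g₀ t‖ := by
        rw [setAverage_eq, Real.volume_real_Icc_of_le (by linarith), smul_eq_mul]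
      rw [havg]
      exact mul_le_mul_of_nonneg_left hle (inv_nonneg.2 (by linarith))
    have := h0.add (tendsto_const_nhds (x := g t))
    rw [zero_add] at this
    exact this.congr fun y => by simp
  · -- right side
    have h0 : Tendsto (fun y => slope γ t y - g t) (𝓝[>] t) (𝓝 0) := by
      apply squeeze_zero_norm' (a := fun y => ⨍ u in Set.Icc t y, ‖g₀ u - g₀ t‖) _ hR
      filter_upwards [Ioc_mem_nhdsGT_of_mem ⟨le_rfl, ht1⟩] with y hy
      have hty : t < y := hy.1
      have heq : slope γ t y - g t = (y - t)⁻¹ • (γ y - γ t - (y - t) • g t) := by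
        have h : (y - t) ≠ 0 := sub_ne_zero.2 hty.ne'
        conv_rhs => rw [smul_sub, smul_smul, inv_mul_cancel₀ h, one_smul]
        rw [slope_def_module]
      rw [heq, norm_smul, norm_inv, Real.norm_eq_abs, abs_of_pos (by linarith)]
      have hle := hIb t y h0t.le hty.le hy.2
      have havg : ⨍ u in Set.Icc t y, ‖g₀ u - g₀ t‖
          = (y - t)⁻¹ * ∫ u in Set.Icc t y, ‖g₀ u - g₀ t‖ := by
        rw [setAverage_eq, Real.volume_real_Icc_of_le (by linarith), smul_eq_mul]
      rw [havg]
      exact mul_le_mul_of_nonneg_left hle (inv_nonneg.2 (by linarith))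
    have := h0.add (tendsto_const_nhds (x := g t))
    rw [zero_add] at this
    exact this.congr fun y => by simp
end AC


/-- Let `γ : [0,1] → ℝⁿ` be absolutely continuous and `F` locally
Lipschitz and directionally differentiable everywhere, with `F'(x,-u) = -F'(x,u)`.
Then for a.e. `t ∈ (0,1)` the composition `F ∘ γ` is differentiable at `t` with
`d/dt (F ∘ γ)(t) = F'(γ t, γ'(t))`. -/
theorem chain_rule_ae {n m : ℕ}
    (γ : ℝ → EuclideanSpace ℝ (Fin n)) (hγ : AbsolutelyContinuousOn01 γ)
    (F : EuclideanSpace ℝ (Fin n) → EuclideanSpace ℝ (Fin m))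
    (hF : LocallyLipschitz F)
    (D' : EuclideanSpace ℝ (Fin n) → EuclideanSpace ℝ (Fin n) → EuclideanSpace ℝ (Fin m))
    (hD' : ∀ x u, Tendsto (fun t : ℝ => t⁻¹ • (F (x + t • u) - F x)) (𝓝[>] 0) (𝓝 (D' x u)))
    (hodd : ∀ x u, D' x (-u) = -D' x u) :
    ∀ᵐ t ∂(volume.restrict (Set.Ioo (0 : ℝ) 1)),
      HasDerivAt (F ∘ γ) (D' (γ t) (deriv γ t)) t := by
  obtain ⟨g, hg, heq⟩ := hγ
  filter_upwards [my_ae_hasDerivAt hg heq] with t ht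
  rw [ht.deriv]
  exact my_chain_at F hF D' hD' hodd γ ht
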